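/- Let F : ℝⁿ → ℝ be convex and differentiable with nonempty minimizer set X* and minimal value F*, and let φ : ℝⁿ → ℝ be differentiable, strictly convex along coordinates, with ∇φ block coordinate-wise Lipschitz with constants Hᵢ > 0; assume F is relative smooth along coordinates with respect to φ with constants Lᵢ > 0. Fix α ∈ ℝ, S_α = ∑_j L_j^α, pᵢ = Lᵢ^α/S_α, H_max = max_i Hᵢ. Let d : ℝⁿ × {1,…,N} → ∪ᵢℝ^{nᵢ} be a selection with d(x,i) a minimizer of the subproblem d ↦ ⟨Uᵢᵀ∇F(x), d⟩ + Lᵢ D_φ(x + Uᵢd, x). Fix x₀ with Δ₀ := F(x₀) − F* > 0 and, for ω ∈ {1,…,N}^k, define iterates x₀(ω) = x₀ and x_{j+1}(ω) = x_j(ω) + U_{ω_j} d(x_j(ω), ω_j). Suppose there is R > 0 such that for every k and index word ω there is x* ∈ X* with ‖x_k(ω) − x*‖_{1−α} ≤ R, where ‖y‖²_{1−α} := ∑ᵢ Lᵢ^{1−α}‖Uᵢᵀy‖². Then for every k ≥ 1: ∑_{ω∈{1,…,N}^k} (∏_{j<k} p_{ω_j}) F(x_k(ω)) − F* ≤ 2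 S_α H_max R² / ( k + 2 S_α H_max R² / Δ₀ ). -/

import Mathlib

noncomputable section
open scoped RealInnerProductSpace

/-- `blockProj b i x` models `Uᵢ Uᵢᵀ x`: the vector of `ℝⁿ` keeping the coordinates of block
`i` (as given by the block assignment `b : Fin n → Fin N`) and zeroing the others.
A vector `d` of the block subspace (i.e. `Uᵢ d`) is modeled as a vector with
`blockProj b i d = d`; then `⟨Uᵢᵀ y, d⟩ = ⟪y, d⟫` and `‖Uᵢᵀ y‖ = ‖blockProj b i y‖`. -/
def blockProj {n N : ℕ} (b : Fin n → Fin N) (i : Fin N) (x : EuclideanSpace ℝ (Fin n)) :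
    EuclideanSpace ℝ (Fin n) :=
  (EuclideanSpace.equiv (Fin n) ℝ).symm (fun j => if b j = i then x j else 0)

/-- Deterministic trajectory of a coordinate method: `traj step x₀ k ω` is the iterate
`x_k(ω)` obtained from `x₀` by applying `step ω₀, step ω₁, …, step ω_{k−1}` in order. -/
def traj {n N : ℕ} (step : Fin N → EuclideanSpace ℝ (Fin n) → EuclideanSpace ℝ (Fin n))
    (x₀ : EuclideanSpace ℝ (Fin n)) : ∀ k : ℕ, (Fin k → Fin N) → EuclideanSpace ℝ (Fin n)
  | 0, _ => x₀
  | (k + 1), ω => step (ω (Fin.last k)) (traj step x₀ k (fun j => ω j.castSucc))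

section Helpers

variable {n N : ℕ} (b : Fin n → Fin N)

lemma blockProj_apply (i : Fin N) (x : EuclideanSpace ℝ (Fin n)) (j : Fin n) :
    blockProj b i x j = if b j = i then x j else 0 := rfl

lemma blockProj_smul (i : Fin N) (c : ℝ) (x : EuclideanSpace ℝ (Fin n)) :
    blockProj b i (c • x) = c • blockProj b i x := by
  ext j
  simp only [blockProj_apply, PiLp.smul_apply, smul_eq_mul]
  split <;> simp

lemma blockProj_idem (i : Fin N) (x : EuclideanSpace ℝ (Fin n)) :
    blockProj b i (blockProj b i x) = blockProj b i x := by
  ext j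
  simp only [blockProj_apply]
  split <;> simp_all

lemma blockProj_neg (i : Fin N) (x : EuclideanSpace ℝ (Fin n)) :
    blockProj b i (-x) = - blockProj b i x := by
  ext j
  simp only [blockProj_apply, PiLp.neg_apply]
  split <;> simp

lemma sum_blockProj (y : EuclideanSpace ℝ (Fin n)) :
    ∑ i : Fin N, blockProj b i y = y := by
  ext j
  rw [WithLp.ofLp_sum, Fintype.sum_apply]
  simp only [blockProj_apply]
  rw [Finset.sum_ite_eq (Finset.univ) (b j) (fun _ => y j)]
  simp

lemma inner_blockProj (i : Fin N) (y h : EuclideanSpace ℝ (Fin n)) (hh : blockProj b i h = h) :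
    ⟪blockProj b i y, h⟫ = ⟪y, h⟫ := by
  simp only [PiLp.inner_apply, RCLike.inner_apply, conj_trivial]
  refine Finset.sum_congr rfl fun j _ => ?_
  have := congrArg (fun v : EuclideanSpace ℝ (Fin n) => v j) hh
  simp only [blockProj_apply] at this ⊢
  by_cases hb : b j = i
  · simp [hb]
  · simp [hb] at this ⊢
    simp [← this]

/-- derivative of `t ↦ f (x + t • h)` -/
lemma hasDerivAt_line {n : ℕ} (f : EuclideanSpace ℝ (Fin n) → ℝ) (hf : Differentiable ℝ f)
    (x h : EuclideanSpace ℝ (Fin n)) (t : ℝ) :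
    HasDerivAt (fun s : ℝ => f (x + s • h)) ⟪gradient f (x + t • h), h⟫ t := by
  have hline : HasDerivAt (fun s : ℝ => x + s • h) h t := by
    simpa using ((hasDerivAt_id t).smul_const h).const_add x
  have hF : HasFDerivAt f (InnerProductSpace.toDual ℝ _ (gradient f (x + t • h))) (x + t • h) :=
    (hf (x + t • h)).hasGradientAt.hasFDerivAt
  have := hF.comp_hasDerivAt t hline
  simpa [InnerProductSpace.toDual_apply_apply, Function.comp_def] using this

/-- gradient inequality for convex differentiable functions -/
lemma grad_ineq {n : ℕ} (F : EuclideanSpace ℝ (Fin n) → ℝ)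
    (hFconv : ConvexOn ℝ Set.univ F) (hFdiff : Differentiable ℝ F)
    (x y : EuclideanSpace ℝ (Fin n)) :
    F x + ⟪gradient F x, y - x⟫ ≤ F y := by
  set g : ℝ → ℝ := fun t => F (x + t • (y - x)) with hg
  have hgconv : ConvexOn ℝ Set.univ g := by
    have := hFconv.comp_affineMap (AffineMap.lineMap x y : ℝ →ᵃ[ℝ] EuclideanSpace ℝ (Fin n))
    simp only [Set.preimage_univ] at this
    suffices hge : g = F ∘ (AffineMap.lineMap x y : ℝ →ᵃ[ℝ] EuclideanSpace ℝ (Fin n)) by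
      rw [hge]; exact this
    funext t
    simp [hg, AffineMap.lineMap_apply, Function.comp]
    rw [add_comm]
  have hgd : ∀ t : ℝ, HasDerivAt g ⟪gradient F (x + t • (y - x)), y - x⟫ t :=
    fun t => hasDerivAt_line F hFdiff x (y - x) t
  have h01 : (0:ℝ) < 1 := one_pos
  have hd := hgconv.deriv_le_slope (Set.mem_univ 0) (Set.mem_univ 1) h01
    ((hgd 0).differentiableAt)
  rw [(hgd 0).deriv] at hd
  simp only [zero_smul, add_zero] at hd
  have hslope : slope g 0 1 = g 1 - g 0 := by simp [slope_def_field]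
  rw [hslope] at hd
  have hg0 : g 0 = F x := by simp [hg]
  have hg1 : g 1 = F y := by simp [hg]
  rw [hg0, hg1] at hd
  linarith

/-- Bregman descent lemma along a block -/
lemma bregman_le {n N : ℕ} (b : Fin n → Fin N) (φ : EuclideanSpace ℝ (Fin n) → ℝ)
    (hφdiff : Differentiable ℝ φ) (i : Fin N) (Hi : ℝ)
    (hlip : ∀ (x h : EuclideanSpace ℝ (Fin n)), blockProj b i h = h →
      ‖blockProj b i (gradient φ (x + h) - gradient φ x)‖ ≤ Hi * ‖h‖)
    (x h : EuclideanSpace ℝ (Fin n)) (hh : blockProj b i h = h) :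
    φ (x + h) - φ x - ⟪gradient φ x, h⟫ ≤ Hi / 2 * ‖h‖ ^ 2 := by
  set ψ : ℝ → ℝ := fun t => φ (x + t • h) - t * ⟪gradient φ x, h⟫ - Hi * t ^ 2 * ‖h‖ ^ 2 / 2
    with hψ
  have hder : ∀ t : ℝ, HasDerivAt ψ
      (⟪gradient φ (x + t • h), h⟫ - ⟪gradient φ x, h⟫ - Hi * t * ‖h‖ ^ 2) t := by
    intro t
    have h1 := hasDerivAt_line φ hφdiff x h t
    have h2 : HasDerivAt (fun t : ℝ => t * ⟪gradient φ x, h⟫) ⟪gradient φ x, h⟫ t := by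
      simpa using (hasDerivAt_id t).mul_const ⟪gradient φ x, h⟫
    have h3 : HasDerivAt (fun t : ℝ => Hi * t ^ 2 * ‖h‖ ^ 2 / 2) (Hi * t * ‖h‖ ^ 2) t := by
      have hsq : HasDerivAt (fun t : ℝ => t ^ 2) (2 * t) t := by
        simpa using hasDerivAt_pow 2 t
      have := ((hsq.const_mul Hi).mul_const (‖h‖ ^ 2)).div_const 2
      exact this.congr_deriv (by ring)
    exact (h1.sub h2).sub h3
  have hbound : ∀ t ∈ Set.Ioo (0:ℝ) 1,
      ⟪gradient φ (x + t • h), h⟫ - ⟪gradient φ x, h⟫ - Hi * t * ‖h‖ ^ 2 ≤ 0 := by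
    intro t ht
    have hth : blockProj b i (t • h) = t • h := by rw [blockProj_smul, hh]
    have hl := hlip x (t • h) hth
    have heq : ⟪gradient φ (x + t • h), h⟫ - ⟪gradient φ x, h⟫
        = ⟪blockProj b i (gradient φ (x + t • h) - gradient φ x), h⟫ := by
      rw [inner_blockProj b i _ h hh, inner_sub_left]
    have hcs : ⟪blockProj b i (gradient φ (x + t • h) - gradient φ x), h⟫
        ≤ ‖blockProj b i (gradient φ (x + t • h) - gradient φ x)‖ * ‖h‖ :=
      real_inner_le_norm _ _
    have hn : ‖t • h‖ = t * ‖h‖ := by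
      rw [norm_smul, Real.norm_eq_abs, abs_of_pos ht.1]
    have hml := mul_le_mul_of_nonneg_right hl (norm_nonneg h)
    rw [hn] at hml
    have hr : Hi * (t * ‖h‖) * ‖h‖ = Hi * t * ‖h‖ ^ 2 := by ring
    rw [hr] at hml
    rw [heq]
    linarith
  have hanti : AntitoneOn ψ (Set.Icc (0:ℝ) 1) := by
    apply antitoneOn_of_deriv_nonpos (convex_Icc 0 1)
    · exact fun t _ => ((hder t).differentiableAt).continuousAt.continuousWithinAt
    · intro t _
      exact ((hder t).differentiableAt).differentiableWithinAt
    · intro t ht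
      rw [interior_Icc] at ht
      rw [(hder t).deriv]
      exact hbound t ht
  have h10 := hanti (Set.left_mem_Icc.2 zero_le_one) (Set.right_mem_Icc.2 zero_le_one)
    zero_le_one
  simp only [hψ] at h10
  simp only [zero_smul, add_zero, zero_mul, zero_pow, one_smul, one_mul, one_pow] at h10
  linarith

lemma rate_rec {C s m' : ℝ} (hC : 0 < C) (hm : 0 < m') (hs0 : 0 ≤ s) (hsC : s ≤ C)
    (hsT : s * m' ≤ C) : s - s ^ 2 / C ≤ C / (m' + 1) := by
  have h1 : s - s ^ 2 / C = (s * C - s ^ 2) / C := by field_simp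
  rw [h1, div_le_div_iff₀ hC (by linarith)]
  nlinarith [mul_nonneg (sub_nonneg.2 hsT) (sub_nonneg.2 hsC), sq_nonneg s]

lemma jensen_sq {ι : Type*} [Fintype ι] (w Δ : ι → ℝ) (hw : ∀ i, 0 ≤ w i)
    (hw1 : ∑ i, w i = 1) : (∑ i, w i * Δ i) ^ 2 ≤ ∑ i, w i * Δ i ^ 2 := by
  have h := Finset.sum_mul_sq_le_sq_mul_sq Finset.univ (fun i => Real.sqrt (w i))
    (fun i => Real.sqrt (w i) * Δ i)
  have e1 : ∀ i : ι, Real.sqrt (w i) * (Real.sqrt (w i) * Δ i) = w i * Δ i := by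
    intro i; rw [← mul_assoc, Real.mul_self_sqrt (hw i)]
  have e2 : ∀ i : ι, Real.sqrt (w i) ^ 2 = w i := fun i => Real.sq_sqrt (hw i)
  have e3 : ∀ i : ι, (Real.sqrt (w i) * Δ i) ^ 2 = w i * Δ i ^ 2 := by
    intro i; rw [mul_pow, e2]
  simp only [e1, e2, e3, hw1, one_mul] at h
  exact h

def snocEquivFun (k N : ℕ) : ((Fin k → Fin N) × Fin N) ≃ (Fin (k + 1) → Fin N) where
  toFun pr := Fin.snoc pr.1 pr.2
  invFun ω := (fun j => ω j.castSucc, ω (Fin.last k))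
  left_inv pr := by
    refine Prod.ext ?_ ?_
    · funext j; simp
    · simp
  right_inv ω := by
    funext j
    cases j using Fin.lastCases with
    | last => simp
    | cast j => simp

lemma sum_snoc_split {k N : ℕ} (g : (Fin (k + 1) → Fin N) → ℝ) :
    ∑ ω : Fin (k + 1) → Fin N, g ω
      = ∑ σ : Fin k → Fin N, ∑ i : Fin N, g (Fin.snoc σ i) := by
  calc ∑ ω : Fin (k + 1) → Fin N, g ω
      = ∑ pr : (Fin k → Fin N) × Fin N, g (snocEquivFun k N pr) :=
        (Fintype.sum_equiv (snocEquivFun k N) _ _ (fun pr => rfl)).symm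
    _ = ∑ σ : Fin k → Fin N, ∑ i : Fin N, g (Fin.snoc σ i) := Fintype.sum_prod_type _

lemma prod_snoc {k N : ℕ} (p : Fin N → ℝ) (σ : Fin k → Fin N) (i : Fin N) :
    (∏ j : Fin (k + 1), p ((Fin.snoc σ i : Fin (k + 1) → Fin N) j))
      = (∏ j : Fin k, p (σ j)) * p i := by
  rw [Fin.prod_univ_castSucc]
  simp

end Helpers

set_option maxHeartbeats 1000000 in
/-- sublinear convergence rate of the relative randomized coordinate
descent method (RRCD) in the convex case.  `F` is convex differentiable with minimizer
set `X*` and minimal value `F*`; `φ` is differentiable, strictly convex along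
coordinates, with `∇φ` block coordinate-wise Lipschitz (constants `Hᵢ > 0`,
`H_max = maxᵢ Hᵢ`); `F` is relative smooth along coordinates w.r.t. `φ` with constants
`Lᵢ > 0`; `d(x,i)` is a minimizer of the block-`i` subproblem at `x`; the iterates stay
within the `‖·‖_{1−α}`-distance `R` of `X*`; `Δ₀ = F(x₀) − F* > 0`.  Then for all `k ≥ 1`
the expected function value gap satisfies
`E[F(x_k)] − F* ≤ 2 S_α H_max R²/(k + 2 S_α H_max R²/Δ₀)`. -/
theorem rrcd_sublinear_rate_convex (n N : ℕ) (b : Fin n → Fin N)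
    (F φ : EuclideanSpace ℝ (Fin n) → ℝ)
    (hFconv : ConvexOn ℝ Set.univ F) (hFdiff : Differentiable ℝ F)
    (Xs : Set (EuclideanSpace ℝ (Fin n))) (hXsne : Xs.Nonempty)
    (Fs : ℝ) (hmin : ∀ y, Fs ≤ F y) (hXs : Xs = {y | F y = Fs})
    (hφdiff : Differentiable ℝ φ)
    (hφsc : ∀ (x : EuclideanSpace ℝ (Fin n)) (i : Fin N),
      StrictConvexOn ℝ {d : EuclideanSpace ℝ (Fin n) | blockProj b i d = d}
        (fun d => φ (x + d)))
    (H : Fin N → ℝ) (hH : ∀ i, 0 < H i)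
    (hφlip : ∀ (x h : EuclideanSpace ℝ (Fin n)) (i : Fin N), blockProj b i h = h →
      ‖blockProj b i (gradient φ (x + h) - gradient φ x)‖ ≤ H i * ‖h‖)
    (L : Fin N → ℝ) (hL : ∀ i, 0 < L i)
    (hrel : ∀ (x d : EuclideanSpace ℝ (Fin n)) (i : Fin N), blockProj b i d = d →
      F (x + d) ≤ F x + ⟪gradient F x, d⟫
        + L i * (φ (x + d) - φ x - ⟪gradient φ x, d⟫))
    (α : ℝ) (Hmax : ℝ) (hHmax : IsGreatest (Set.range H) Hmax)
    (d : EuclideanSpace ℝ (Fin n) → Fin N → EuclideanSpace ℝ (Fin n))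
    (hdblock : ∀ x i, blockProj b i (d x i) = d x i)
    (hdmin : ∀ x i, ∀ e : EuclideanSpace ℝ (Fin n), blockProj b i e = e →
      ⟪gradient F x, d x i⟫ + L i * (φ (x + d x i) - φ x - ⟪gradient φ x, d x i⟫)
        ≤ ⟪gradient F x, e⟫ + L i * (φ (x + e) - φ x - ⟪gradient φ x, e⟫))
    (x₀ : EuclideanSpace ℝ (Fin n)) (hΔ₀ : 0 < F x₀ - Fs)
    (R : ℝ) (hR : 0 < R)
    (hRbound : ∀ (k : ℕ) (ω : Fin k → Fin N), ∃ xs ∈ Xs,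
      Real.sqrt (∑ i : Fin N,
          L i ^ (1 - α) * ‖blockProj b i (traj (fun i x => x + d x i) x₀ k ω - xs)‖ ^ 2)
        ≤ R) :
    ∀ k : ℕ, 1 ≤ k →
      (∑ ω : Fin k → Fin N,
          (∏ j : Fin k, (L (ω j) ^ α / ∑ l : Fin N, L l ^ α))
            * F (traj (fun i x => x + d x i) x₀ k ω)) - Fs
        ≤ 2 * (∑ l : Fin N, L l ^ α) * Hmax * R ^ 2
            / ((k : ℝ) + 2 * (∑ l : Fin N, L l ^ α) * Hmax * R ^ 2 / (F x₀ - Fs)) := by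
  classical
  obtain ⟨imax, himax⟩ := hHmax.1
  have hHle : ∀ i, H i ≤ Hmax := fun i => hHmax.2 ⟨i, rfl⟩
  have hHmaxpos : 0 < Hmax := himax ▸ hH imax
  haveI : Nonempty (Fin N) := ⟨imax⟩
  set S := ∑ l : Fin N, L l ^ α with hSdef
  have hSpos : 0 < S :=
    Finset.sum_pos (fun l _ => Real.rpow_pos_of_pos (hL l) α) Finset.univ_nonempty
  set C := 2 * S * Hmax * R ^ 2 with hCdef
  have hCpos : 0 < C := by positivity
  set p : Fin N → ℝ := fun i => L i ^ α / S with hp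
  have hppos : ∀ i, 0 < p i := fun i => div_pos (Real.rpow_pos_of_pos (hL i) α) hSpos
  have hpsum : ∑ i : Fin N, p i = 1 := by
    rw [hp, ← Finset.sum_div]
    exact div_self hSpos.ne'
  set X := traj (fun i x => x + d x i) x₀ with hXdef
  -- key one-step expected decrease
  have key : ∀ x : EuclideanSpace ℝ (Fin n),
      (∃ xs ∈ Xs,
        Real.sqrt (∑ i : Fin N, L i ^ (1 - α) * ‖blockProj b i (x - xs)‖ ^ 2) ≤ R) →
      ∑ i : Fin N, p i * (F (x + d x i) - Fs)
        ≤ (F x - Fs) - (F x - Fs) ^ 2 / C := by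
    rintro x ⟨xs, hxsXs, hxsR⟩
    have hFxs : F xs = Fs := by rw [hXs] at hxsXs; exact hxsXs
    have hΔnn : 0 ≤ F x - Fs := sub_nonneg.2 (hmin x)
    set Δ := F x - Fs with hΔdef
    set t := Δ / (Hmax * R ^ 2) with htdef
    have htnn : 0 ≤ t := div_nonneg hΔnn (by positivity)
    set v := xs - x with hvdef
    set e : Fin N → EuclideanSpace ℝ (Fin n) := fun i => (t / L i ^ α) • blockProj b i v
      with hedef
    have heblock : ∀ i, blockProj b i (e i) = e i := by
      intro i
      rw [hedef]
      simp only
      rw [blockProj_smul, blockProj_idem]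
    have hterm : ∀ i, F (x + d x i) - Fs
        ≤ Δ + (⟪gradient F x, e i⟫ + L i * (H i / 2 * ‖e i‖ ^ 2)) := by
      intro i
      have h1 := hrel x (d x i) i (hdblock x i)
      have h2 := hdmin x i (e i) (heblock i)
      have h3 : φ (x + e i) - φ x - ⟪gradient φ x, e i⟫ ≤ H i / 2 * ‖e i‖ ^ 2 :=
        bregman_le b φ hφdiff i (H i) (fun x' h' hb => hφlip x' h' i hb) x (e i)
          (heblock i)
      have h4 := mul_le_mul_of_nonneg_left h3 (hL i).le
      linarith
    have hsum1 : ∑ i : Fin N, p i * (F (x + d x i) - Fs)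
        ≤ Δ + ((∑ i : Fin N, p i * ⟪gradient F x, e i⟫)
            + ∑ i : Fin N, p i * (L i * (H i / 2 * ‖e i‖ ^ 2))) := by
      calc ∑ i : Fin N, p i * (F (x + d x i) - Fs)
          ≤ ∑ i : Fin N, p i * (Δ + (⟪gradient F x, e i⟫ + L i * (H i / 2 * ‖e i‖ ^ 2))) :=
            Finset.sum_le_sum fun i _ => mul_le_mul_of_nonneg_left (hterm i) (hppos i).le
        _ = ∑ i : Fin N, (p i * Δ
              + (p i * ⟪gradient F x, e i⟫ + p i * (L i * (H i / 2 * ‖e i‖ ^ 2)))) :=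
            Finset.sum_congr rfl fun i _ => by ring
        _ = (∑ i : Fin N, p i * Δ)
              + ((∑ i : Fin N, p i * ⟪gradient F x, e i⟫)
                + ∑ i : Fin N, p i * (L i * (H i / 2 * ‖e i‖ ^ 2))) := by
            rw [Finset.sum_add_distrib, Finset.sum_add_distrib]
        _ = Δ + ((∑ i : Fin N, p i * ⟪gradient F x, e i⟫)
                + ∑ i : Fin N, p i * (L i * (H i / 2 * ‖e i‖ ^ 2))) := by
            rw [← Finset.sum_mul, hpsum, one_mul]
    have hA : ∑ i : Fin N, p i * ⟪gradient F x, e i⟫ = t / S * ⟪gradient F x, v⟫ := by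
      have hAi : ∀ i : Fin N, p i * ⟪gradient F x, e i⟫
          = t / S * ⟪gradient F x, blockProj b i v⟫ := by
        intro i
        have hLα : (0:ℝ) < L i ^ α := Real.rpow_pos_of_pos (hL i) α
        rw [hedef]
        simp only
        rw [real_inner_smul_right, hp]
        simp only
        field_simp
      rw [Finset.sum_congr rfl fun i _ => hAi i, ← Finset.mul_sum, ← inner_sum,
        sum_blockProj]
    have hAle : t / S * ⟪gradient F x, v⟫ ≤ -(t / S * Δ) := by
      have hg := grad_ineq F hFconv hFdiff x xs
      have hiv : ⟪gradient F x, v⟫ ≤ -Δ := by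
        rw [hvdef]
        have : Δ = F x - Fs := hΔdef
        linarith [hg, hFxs.le, hFxs.ge]
      calc t / S * ⟪gradient F x, v⟫ ≤ t / S * (-Δ) :=
            mul_le_mul_of_nonneg_left hiv (by positivity)
        _ = -(t / S * Δ) := by ring
    have hQle : ∑ i : Fin N, L i ^ (1 - α) * ‖blockProj b i v‖ ^ 2 ≤ R ^ 2 := by
      have hQnn : 0 ≤ ∑ i : Fin N, L i ^ (1 - α) * ‖blockProj b i (x - xs)‖ ^ 2 :=
        Finset.sum_nonneg fun i _ =>
          mul_nonneg (Real.rpow_nonneg (hL i).le _) (sq_nonneg _)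
      have h1 : ∑ i : Fin N, L i ^ (1 - α) * ‖blockProj b i (x - xs)‖ ^ 2 ≤ R ^ 2 := by
        nlinarith [Real.sq_sqrt hQnn,
          Real.sqrt_nonneg (∑ i : Fin N, L i ^ (1 - α) * ‖blockProj b i (x - xs)‖ ^ 2),
          hxsR, hR]
      have h2 : ∀ i : Fin N, ‖blockProj b i v‖ = ‖blockProj b i (x - xs)‖ := by
        intro i
        rw [hvdef, ← neg_sub x xs, blockProj_neg, norm_neg]
      calc ∑ i : Fin N, L i ^ (1 - α) * ‖blockProj b i v‖ ^ 2
          = ∑ i : Fin N, L i ^ (1 - α) * ‖blockProj b i (x - xs)‖ ^ 2 :=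
            Finset.sum_congr rfl fun i _ => by rw [h2]
        _ ≤ R ^ 2 := h1
    have hB : ∑ i : Fin N, p i * (L i * (H i / 2 * ‖e i‖ ^ 2))
        ≤ t ^ 2 * Hmax * R ^ 2 / (2 * S) := by
      have hBi : ∀ i : Fin N, p i * (L i * (H i / 2 * ‖e i‖ ^ 2))
          = t ^ 2 / (2 * S) * (H i * (L i ^ (1 - α) * ‖blockProj b i v‖ ^ 2)) := by
        intro i
        have hLα : (0:ℝ) < L i ^ α := Real.rpow_pos_of_pos (hL i) α
        have hnorm : ‖e i‖ ^ 2 = (t / L i ^ α) ^ 2 * ‖blockProj b i v‖ ^ 2 := by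
          rw [hedef]
          simp only
          rw [norm_smul, Real.norm_eq_abs, abs_of_nonneg (div_nonneg htnn hLα.le), mul_pow]
        rw [hnorm, hp]
        simp only
        set a := L i ^ α with ha
        set c := L i ^ (1 - α) with hc
        have hac : c * a = L i := by rw [ha, hc, ← Real.rpow_add (hL i)]; norm_num
        rw [← hac]
        field_simp
      rw [Finset.sum_congr rfl fun i _ => hBi i, ← Finset.mul_sum]
      have h1 : ∑ i : Fin N, H i * (L i ^ (1 - α) * ‖blockProj b i v‖ ^ 2)
          ≤ Hmax * R ^ 2 := by
        calc ∑ i : Fin N, H i * (L i ^ (1 - α) * ‖blockProj b i v‖ ^ 2)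
            ≤ ∑ i : Fin N, Hmax * (L i ^ (1 - α) * ‖blockProj b i v‖ ^ 2) :=
              Finset.sum_le_sum fun i _ => mul_le_mul_of_nonneg_right (hHle i)
                (mul_nonneg (Real.rpow_nonneg (hL i).le _) (sq_nonneg _))
          _ = Hmax * ∑ i : Fin N, L i ^ (1 - α) * ‖blockProj b i v‖ ^ 2 :=
              (Finset.mul_sum _ _ _).symm
          _ ≤ Hmax * R ^ 2 := mul_le_mul_of_nonneg_left hQle hHmaxpos.le
      calc t ^ 2 / (2 * S) * ∑ i : Fin N, H i * (L i ^ (1 - α) * ‖blockProj b i v‖ ^ 2)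
          ≤ t ^ 2 / (2 * S) * (Hmax * R ^ 2) :=
            mul_le_mul_of_nonneg_left h1 (by positivity)
        _ = t ^ 2 * Hmax * R ^ 2 / (2 * S) := by ring
    have hfinal : Δ + (-(t / S * Δ) + t ^ 2 * Hmax * R ^ 2 / (2 * S)) = Δ - Δ ^ 2 / C := by
      rw [htdef, hCdef]
      field_simp [hHmaxpos.ne', hR.ne', hSpos.ne']
      ring
    calc ∑ i : Fin N, p i * (F (x + d x i) - Fs)
        ≤ Δ + ((∑ i : Fin N, p i * ⟪gradient F x, e i⟫)
            + ∑ i : Fin N, p i * (L i * (H i / 2 * ‖e i‖ ^ 2))) := hsum1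
      _ ≤ Δ + (-(t / S * Δ) + t ^ 2 * Hmax * R ^ 2 / (2 * S)) := by
          rw [hA] at *
          linarith [hAle, hB]
      _ = Δ - Δ ^ 2 / C := hfinal
  -- gap is bounded by C at admissible points
  have keyC : ∀ x : EuclideanSpace ℝ (Fin n),
      (∃ xs ∈ Xs,
        Real.sqrt (∑ i : Fin N, L i ^ (1 - α) * ‖blockProj b i (x - xs)‖ ^ 2) ≤ R) →
      F x - Fs ≤ C := by
    intro x hx
    have h1 := key x hx
    have h2 : 0 ≤ ∑ i : Fin N, p i * (F (x + d x i) - Fs) :=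
      Finset.sum_nonneg fun i _ => mul_nonneg (hppos i).le (sub_nonneg.2 (hmin _))
    have hΔnn : 0 ≤ F x - Fs := sub_nonneg.2 (hmin x)
    have h3 : (F x - Fs) ^ 2 / C ≤ F x - Fs := by linarith
    have h4 : (F x - Fs) ^ 2 ≤ (F x - Fs) * C := (div_le_iff₀ hCpos).mp h3
    nlinarith [h4, hΔnn, hCpos]
  -- weights
  have hwnn : ∀ (k : ℕ) (ω : Fin k → Fin N), 0 ≤ ∏ j : Fin k, p (ω j) :=
    fun k ω => Finset.prod_nonneg fun j _ => (hppos _).le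
  have hwsum : ∀ k : ℕ, ∑ ω : Fin k → Fin N, ∏ j : Fin k, p (ω j) = 1 := by
    intro k
    induction k with
    | zero => simp
    | succ k ih =>
      rw [sum_snoc_split (fun ω => ∏ j : Fin (k + 1), p (ω j))]
      calc ∑ σ : Fin k → Fin N, ∑ i : Fin N,
            ∏ j : Fin (k + 1), p ((Fin.snoc σ i : Fin (k + 1) → Fin N) j)
          = ∑ σ : Fin k → Fin N, ∑ i : Fin N, (∏ j : Fin k, p (σ j)) * p i :=
            Finset.sum_congr rfl fun σ _ => Finset.sum_congr rfl fun i _ => prod_snoc p σ i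
        _ = ∑ σ : Fin k → Fin N, (∏ j : Fin k, p (σ j)) * ∑ i : Fin N, p i :=
            Finset.sum_congr rfl fun σ _ => (Finset.mul_sum _ _ _).symm
        _ = 1 := by
            rw [hpsum]
            simpa using ih
  have hXsnoc : ∀ (k : ℕ) (σ : Fin k → Fin N) (i : Fin N),
      X (k + 1) (Fin.snoc σ i) = X k σ + d (X k σ) i := by
    intro k σ i
    rw [hXdef]
    simp only [traj, Fin.snoc_last, Fin.snoc_castSucc]
  -- expected gaps
  set δ : ℕ → ℝ :=
    fun k => ∑ ω : Fin k → Fin N, (∏ j : Fin k, p (ω j)) * (F (X k ω) - Fs) with hδdef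
  have hδ0 : δ 0 = F x₀ - Fs := by
    rw [hδdef]
    simp [hXdef, traj]
  have hδnn : ∀ k, 0 ≤ δ k := by
    intro k
    rw [hδdef]
    exact Finset.sum_nonneg fun ω _ => mul_nonneg (hwnn k ω) (sub_nonneg.2 (hmin _))
  have hδC : ∀ k, δ k ≤ C := by
    intro k
    rw [hδdef]
    simp only
    calc ∑ ω : Fin k → Fin N, (∏ j : Fin k, p (ω j)) * (F (X k ω) - Fs)
        ≤ ∑ ω : Fin k → Fin N, (∏ j : Fin k, p (ω j)) * C :=
          Finset.sum_le_sum fun ω _ =>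
            mul_le_mul_of_nonneg_left (keyC _ (hRbound k ω)) (hwnn k ω)
      _ = C := by rw [← Finset.sum_mul, hwsum, one_mul]
  have hrec : ∀ k : ℕ, δ (k + 1) ≤ δ k - δ k ^ 2 / C := by
    intro k
    have h1 : δ (k + 1) = ∑ σ : Fin k → Fin N, ∑ i : Fin N,
        ((∏ j : Fin k, p (σ j)) * p i) * (F (X k σ + d (X k σ) i) - Fs) := by
      rw [hδdef]
      simp only
      rw [sum_snoc_split (fun ω => (∏ j : Fin (k + 1), p (ω j)) * (F (X (k + 1) ω) - Fs))]
      exact Finset.sum_congr rfl fun σ _ => Finset.sum_congr rfl fun i _ => by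
        rw [prod_snoc, hXsnoc]
    have h2 : δ (k + 1) ≤ ∑ σ : Fin k → Fin N,
        (∏ j : Fin k, p (σ j)) * ((F (X k σ) - Fs) - (F (X k σ) - Fs) ^ 2 / C) := by
      rw [h1]
      refine Finset.sum_le_sum fun σ _ => ?_
      have hkey := key (X k σ) (hRbound k σ)
      calc ∑ i : Fin N, ((∏ j : Fin k, p (σ j)) * p i) * (F (X k σ + d (X k σ) i) - Fs)
          = (∏ j : Fin k, p (σ j)) * ∑ i : Fin N, p i * (F (X k σ + d (X k σ) i) - Fs) := by
            rw [Finset.mul_sum]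
            exact Finset.sum_congr rfl fun i _ => by ring
        _ ≤ _ := mul_le_mul_of_nonneg_left hkey (hwnn k σ)
    have h3 : ∑ σ : Fin k → Fin N,
        (∏ j : Fin k, p (σ j)) * ((F (X k σ) - Fs) - (F (X k σ) - Fs) ^ 2 / C)
        = δ k - (∑ σ : Fin k → Fin N, (∏ j : Fin k, p (σ j)) * (F (X k σ) - Fs) ^ 2) / C := by
      rw [hδdef]
      simp only
      rw [Finset.sum_div, ← Finset.sum_sub_distrib]
      exact Finset.sum_congr rfl fun σ _ => by ring
    have h4 : δ k ^ 2 ≤ ∑ σ : Fin k → Fin N, (∏ j : Fin k, p (σ j)) * (F (X k σ) - Fs) ^ 2 := by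
      rw [hδdef]
      simp only
      exact jensen_sq _ _ (fun σ => hwnn k σ) (hwsum k)
    have h5 : δ k ^ 2 / C
        ≤ (∑ σ : Fin k → Fin N, (∏ j : Fin k, p (σ j)) * (F (X k σ) - Fs) ^ 2) / C := by
      gcongr
    rw [h3] at h2
    linarith
  -- induction on k
  have main : ∀ k : ℕ, δ k ≤ C / (k + C / (F x₀ - Fs)) := by
    intro k
    induction k with
    | zero =>
      rw [hδ0]
      simp only [Nat.cast_zero, zero_add]
      rw [div_div_eq_mul_div, mul_comm, mul_div_assoc, div_self hCpos.ne', mul_one]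
    | succ k ih =>
      have hkm : (0:ℝ) < (k : ℝ) + C / (F x₀ - Fs) := by positivity
      have hsT : δ k * ((k : ℝ) + C / (F x₀ - Fs)) ≤ C := (le_div_iff₀ hkm).mp ih
      have hrr := rate_rec hCpos hkm (hδnn k) (hδC k) hsT
      calc δ (k + 1) ≤ δ k - δ k ^ 2 / C := hrec k
        _ ≤ C / (((k : ℝ) + C / (F x₀ - Fs)) + 1) := hrr
        _ = C / ((((k : ℕ) + 1 : ℕ) : ℝ) + C / (F x₀ - Fs)) := by
            push_cast
            ring_nf
  -- conclude
  intro k hk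
  have h := main k
  have hδeq : δ k = (∑ ω : Fin k → Fin N, (∏ j : Fin k, p (ω j)) * F (X k ω)) - Fs := by
    rw [hδdef]
    simp only [mul_sub]
    rw [Finset.sum_sub_distrib, ← Finset.sum_mul, hwsum, one_mul]
  rw [hδeq] at h
  simp only [hp] at h
  exact h
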